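/- arXiv:2210.16281 — 2 statements merged into one kernel-verified Lean document; each statement's English description precedes it below -/
import Mathlib

section
/- Let G be a terrain-like graph on [n] and let {a,b} with a < b be a ⪯-minimal edge of G. Then the graph G' obtained from G by deleting {a,b} is terrain-like, and Π(G) = (2a, 2b-1)∘Π(G'). -/
/-- A graph on vertex set `[n]` (vertices `Fin n` in increasing order) is terrain-like
if it satisfies the X-property. -/
def TerrainLike {n : ℕ} (G : SimpleGraph (Fin n)) : Prop :=
  ∀ a b c d : Fin n, a < b → b < c → c < d → G.Adj a c → G.Adj b d → G.Adj a d

/-- The order `⪯` on pairs `(a,b)` with `a < b`: `{a,b} ⪯ {c,d}` iff `c ≤ a < b ≤ d`. -/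
def PairLE {n : ℕ} (e f : Fin n × Fin n) : Prop :=
  f.1 ≤ e.1 ∧ e.2 ≤ f.2

/-- `τ({a,b})` is the transposition `(2a, 2b-1)` of `[2n]`; here vertices and the
elements of `[2n]` are 0-indexed, so it swaps the 0-based positions `2a+1` and `2b`. -/
def tau {n : ℕ} (e : Fin n × Fin n) : Equiv.Perm (Fin (2 * n)) :=
  Equiv.swap ⟨2 * e.1.val + 1, by have := e.1.isLt; omega⟩
    ⟨2 * e.2.val, by have := e.2.isLt; omega⟩

/-- `π₀ = (1,2)(3,4)⋯(2n-1,2n)` (0-indexed: swaps `2i` and `2i+1` for each `i < n`). -/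
def pi0 (n : ℕ) : Equiv.Perm (Fin (2 * n)) :=
  (List.ofFn (fun i : Fin n =>
    Equiv.swap ⟨2 * i.val, by have := i.isLt; omega⟩
      ⟨2 * i.val + 1, by have := i.isLt; omega⟩)).prod

/-- Dumont derangements of the second kind, on `Fin (2*n)` (0-indexed version of `[2n]`):
`π(2i-1) ≥ 2i-1`, `π(2i) < 2i` for `i ∈ [n]`, and `π(2i-1) > 2i-1` for `i ∈ [n-1]`. -/
def IsDumontDerangement {n : ℕ} (π : Equiv.Perm (Fin (2 * n))) : Prop :=
  (∀ i : Fin (2 * n), i.val % 2 = 0 → i.val ≤ (π i).val) ∧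
  (∀ i : Fin (2 * n), i.val % 2 = 1 → (π i).val < i.val) ∧
  (∀ i : Fin (2 * n), i.val % 2 = 0 → i.val < 2 * n - 2 → i.val < (π i).val)

/-- `i` and `j` are in edge configuration in `π` iff
`π⁻¹(i) < π⁻¹(j) ⟺ π⁻¹(i) ≡ π⁻¹(j) (mod 2)`. -/
def EdgeConfig {m : ℕ} (π : Equiv.Perm (Fin m)) (i j : Fin m) : Prop :=
  (π.symm i).val < (π.symm j).val ↔ (π.symm i).val % 2 = (π.symm j).val % 2

/-- A list `e₁ > ⋯ > e_m` of the edges of `G` (as pairs `(a,b)`, `a < b`), ordered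
descendingly with respect to a valid linear order (one extending `⪯`): no earlier
element is `⪯`-below a later one. -/
def ValidEdgeList {n : ℕ} (G : SimpleGraph (Fin n)) (l : List (Fin n × Fin n)) : Prop :=
  l.Nodup ∧ (∀ e : Fin n × Fin n, e ∈ l ↔ (e.1 < e.2 ∧ G.Adj e.1 e.2)) ∧
  l.Pairwise (fun e f => ¬ PairLE e f)

/-- `Π(G) = τ(e_m)⋯τ(e₁)π₀` for an edge list `[e₁,…,e_m]`. -/
def permOfList {n : ℕ} (l : List (Fin n × Fin n)) : Equiv.Perm (Fin (2 * n)) :=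
  (l.reverse.map tau).prod * pi0 n

lemma tau_commute {n : ℕ} (e x : Fin n × Fin n)
    (h1 : ¬ PairLE e x) (h2 : ¬ PairLE x e) : Commute (tau e) (tau x) := by
  have hne1 : e.1 ≠ x.1 := by
    intro h
    simp only [PairLE, not_and] at h1 h2
    have := h1 h.ge
    have := h2 h.le
    omega
  have hne2 : e.2 ≠ x.2 := by
    intro h
    simp only [PairLE, not_and] at h1 h2
    rcases le_or_gt x.1 e.1 with hc | hc
    · exact absurd h.le (h1 hc)
    · exact absurd h.ge (h2 hc.le)
  have hv1 : e.1.val ≠ x.1.val := fun h => hne1 (Fin.ext h)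
  have hv2 : e.2.val ≠ x.2.val := fun h => hne2 (Fin.ext h)
  apply Equiv.Perm.Disjoint.commute
  intro z
  unfold tau
  by_cases hz1 : z = ⟨2 * e.1.val + 1, by have := e.1.isLt; omega⟩
  · right; subst hz1; apply Equiv.swap_apply_of_ne_of_ne <;>
      · intro h; have := Fin.val_eq_of_eq h; simp at this; omega
  by_cases hz2 : z = ⟨2 * e.2.val, by have := e.2.isLt; omega⟩
  · right; subst hz2; apply Equiv.swap_apply_of_ne_of_ne <;>
      · intro h; have := Fin.val_eq_of_eq h; simp at this; omega
  · left; exact Equiv.swap_apply_of_ne_of_ne hz1 hz2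

lemma prod_eq_of_perm_pairwise {α M : Type*} [Monoid M] (f : α → M)
    (R : α → α → Prop) (hR : ∀ x y, R x y → R y x → Commute (f x) (f y)) :
    ∀ l₁ l₂ : List α, l₁.Perm l₂ → l₁.Pairwise R → l₂.Pairwise R →
      (l₁.map f).prod = (l₂.map f).prod := by
  intro l₁
  induction l₁ with
  | nil =>
    intro l₂ hp _ _
    rw [← hp.nil_eq]
  | cons e t ih =>
    intro l₂ hp h1 h2
    have he : e ∈ l₂ := hp.mem_iff.mp List.mem_cons_self
    obtain ⟨u, v, rfl⟩ := List.append_of_mem he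
    have hcomm : ∀ x ∈ u.map f, Commute (f e) x := by
      intro y hy
      obtain ⟨x, hx, rfl⟩ := List.mem_map.mp hy
      by_cases hxe : x = e
      · subst hxe; exact Commute.refl _
      · have hxt : x ∈ t := by
          have : x ∈ e :: t := hp.mem_iff.mpr (by simp [hx])
          rcases List.mem_cons.mp this with h | h
          · exact absurd h hxe
          · exact h
        have hRex : R e x := (List.pairwise_cons.mp h1).1 x hxt
        have hRxe : R x e := by
          have := (List.pairwise_append.mp h2).2.2
          exact this x hx e List.mem_cons_self
        exact hR e x hRex hRxe
    have hperm : t.Perm (u ++ v) := by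
      have : (e :: t).Perm (e :: (u ++ v)) :=
        hp.trans (List.perm_middle (a := e) (l₁ := u) (l₂ := v))
      exact this.cons_inv
    have hpt : t.Pairwise R := (List.pairwise_cons.mp h1).2
    have hpuv : (u ++ v).Pairwise R := by
      have hsub : (u ++ v).Sublist (u ++ e :: v) :=
        List.Sublist.append_left (List.sublist_cons_self e v) u
      exact h2.sublist hsub
    have key := ih (u ++ v) hperm hpt hpuv
    have hc : Commute (f e) (u.map f).prod := Commute.list_prod_right _ _ hcomm
    calc ((e :: t).map f).prod = f e * (t.map f).prod := by simp
      _ = f e * ((u ++ v).map f).prod := by rw [key]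
      _ = f e * ((u.map f).prod * (v.map f).prod) := by simp
      _ = (u.map f).prod * (f e * (v.map f).prod) := by
          rw [← mul_assoc, hc.eq, mul_assoc]
      _ = ((u ++ e :: v).map f).prod := by simp


/-- Deleting a `⪯`-minimal edge `{a,b}` of a terrain-like graph `G` yields a terrain-like
graph `G'` with `Π(G) = (2a, 2b-1)∘Π(G')`. -/
theorem delete_min_edge {n : ℕ} (G : SimpleGraph (Fin n)) (hG : TerrainLike G)
    (a b : Fin n) (hab : a < b) (hadj : G.Adj a b)
    (hmin : ∀ u v : Fin n, u < v → G.Adj u v → PairLE (u, v) (a, b) → (u, v) = (a, b)) :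
    TerrainLike (G.deleteEdges {s(a, b)}) ∧
    ∀ l l' : List (Fin n × Fin n), ValidEdgeList G l →
      ValidEdgeList (G.deleteEdges {s(a, b)}) l' →
      permOfList l = tau (a, b) * permOfList l' := by
  constructor
  · intro a' b' c' d' h1 h2 h3 hac hbd
    rw [SimpleGraph.deleteEdges_adj] at hac hbd ⊢
    refine ⟨hG a' b' c' d' h1 h2 h3 hac.1 hbd.1, ?_⟩
    simp only [Set.mem_singleton_iff, Sym2.eq_iff]
    rintro (⟨rfl, rfl⟩ | ⟨rfl, rfl⟩)
    · have hbd' : b' < d' := h2.trans h3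
      have h := hmin b' d' hbd' hbd.1 ⟨h1.le, le_refl _⟩
      have hba : b' = a' := (Prod.ext_iff.mp h).1
      rw [hba] at h1
      exact lt_irrefl _ h1
    · exact absurd (h1.trans (h2.trans h3)) (not_lt.mpr hab.le)
  · intro l l' hl hl'
    obtain ⟨hnd, hmem, hpw⟩ := hl
    obtain ⟨hnd', hmem', hpw'⟩ := hl'
    have habmem : (a, b) ∉ l' := by
      intro h
      have := ((hmem' _).mp h).2
      rw [SimpleGraph.deleteEdges_adj] at this
      exact this.2 rfl
    have hnd2 : (l' ++ [(a, b)]).Nodup := by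
      simp [List.nodup_append, hnd', habmem]
      rintro x y hxy rfl rfl
      exact habmem hxy
    have hmemiff : ∀ e, e ∈ l ↔ e ∈ l' ++ [(a, b)] := by
      intro e
      rw [hmem, List.mem_append, hmem', List.mem_singleton,
        SimpleGraph.deleteEdges_adj]
      constructor
      · rintro ⟨hlt, hadj'⟩
        by_cases he : e = (a, b)
        · right; exact he
        · left
          refine ⟨hlt, hadj', ?_⟩
          simp only [Set.mem_singleton_iff, Sym2.eq_iff]
          rintro (⟨h1, h2⟩ | ⟨h1, h2⟩)
          · exact he (Prod.ext h1 h2)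
          · rw [h1, h2] at hlt
            exact absurd (hab.trans hlt) (lt_irrefl a)
      · rintro (⟨hlt, hadj', _⟩ | rfl)
        · exact ⟨hlt, hadj'⟩
        · exact ⟨hab, hadj⟩
    have hperm : l.Perm (l' ++ [(a, b)]) :=
      (List.perm_ext_iff_of_nodup hnd hnd2).mpr hmemiff
    have hnotle : ∀ x ∈ l', ¬ PairLE x (a, b) := by
      intro x hx hle
      have hx' := (hmem' _).mp hx
      rw [SimpleGraph.deleteEdges_adj] at hx'
      have := hmin x.1 x.2 hx'.1 hx'.2.1 hle
      exact hx'.2.2 (by obtain ⟨h1, h2⟩ := Prod.mk.inj this; rw [h1, h2]; exact Set.mem_singleton _)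
    have hR : ∀ x y : Fin n × Fin n, ¬ PairLE y x → ¬ PairLE x y →
        Commute (tau x) (tau y) := fun x y h1 h2 => tau_commute x y h2 h1
    have hperm2 : l.reverse.Perm ((a, b) :: l'.reverse) := by
      refine ((l.reverse_perm).trans hperm).trans ?_
      exact (List.perm_append_singleton _ _).trans ((l'.reverse_perm).symm.cons _)
    have hp1 : l.reverse.Pairwise (fun e f => ¬ PairLE f e) :=
      List.pairwise_reverse.mpr hpw
    have hp2 : ((a, b) :: l'.reverse).Pairwise (fun e f => ¬ PairLE f e) := by
      rw [List.pairwise_cons]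
      exact ⟨fun x hx => hnotle x (List.mem_reverse.mp hx),
        List.pairwise_reverse.mpr hpw'⟩
    have hprod := prod_eq_of_perm_pairwise tau (fun e f => ¬ PairLE f e) hR
      l.reverse ((a, b) :: l'.reverse) hperm2 hp1 hp2
    unfold permOfList
    rw [hprod]
    simp [mul_assoc]
end

section
/- Let G be a terrain-like graph on [n] and {x,y} with x < y a ⪯-minimal edge of G. Then the pair (2x, 2y-1) is in edge configuration in Π(G). -/
lemma prod_fix {α : Type*} (L : List (Equiv.Perm α)) (v : α)
    (h : ∀ σ ∈ L, σ v = v) : L.prod v = v := by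
  induction L with
  | nil => rfl
  | cons σ L ih =>
    rw [List.prod_cons, Equiv.Perm.mul_apply, ih (fun τ hτ => h τ (List.mem_cons_of_mem _ hτ)),
      h σ (List.mem_cons_self)]

lemma prod_eval_single {ι α : Type*} (f : ι → Equiv.Perm α) (v w : α) :
    ∀ (L : List ι), L.Nodup → ∀ i, i ∈ L → f i v = w →
      (∀ j ∈ L, j ≠ i → f j v = v ∧ f j w = w) → (L.map f).prod v = w := by
  intro L
  induction L with
  | nil => intro _ i hi; exact absurd hi List.not_mem_nil
  | cons j L ih =>
    intro hnd i hi hvw hoth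
    rw [List.map_cons, List.prod_cons, Equiv.Perm.mul_apply]
    rcases List.mem_cons.mp hi with h | h
    · subst h
      have hfix : (L.map f).prod v = v := by
        apply prod_fix
        intro σ hσ
        obtain ⟨k, hk, rfl⟩ := List.mem_map.mp hσ
        have hki : k ≠ i := fun h => ((List.nodup_cons.mp hnd).1 (h ▸ hk))
        exact (hoth k (List.mem_cons_of_mem _ hk) hki).1
      rw [hfix, hvw]
    · have hji : j ≠ i := fun hh => (List.nodup_cons.mp hnd).1 (by rw [hh]; exact h)
      rw [ih (List.nodup_cons.mp hnd).2 i h hvw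
        (fun k hk hki => hoth k (List.mem_cons_of_mem _ hk) hki)]
      exact (hoth j (List.mem_cons_self) hji).2

lemma pi0_apply_even {n : ℕ} (a : ℕ) (ha : a < n) (h1 : 2*a < 2*n) (h2 : 2*a+1 < 2*n) :
    pi0 n ⟨2*a, h1⟩ = ⟨2*a+1, h2⟩ := by
  unfold pi0
  rw [List.ofFn_eq_map]
  apply prod_eval_single _ _ _ _ (List.nodup_finRange n) ⟨a, ha⟩ (List.mem_finRange _)
  · exact Equiv.swap_apply_left _ _
  · intro j _ hj
    have hja : j.val ≠ a := fun hh => hj (Fin.ext hh)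
    constructor <;>
    · apply Equiv.swap_apply_of_ne_of_ne <;>
      · intro hh
        have := congrArg Fin.val hh
        simp only at this
        omega

lemma pi0_apply_odd {n : ℕ} (a : ℕ) (ha : a < n) (h1 : 2*a+1 < 2*n) (h2 : 2*a < 2*n) :
    pi0 n ⟨2*a+1, h1⟩ = ⟨2*a, h2⟩ := by
  unfold pi0
  rw [List.ofFn_eq_map]
  apply prod_eval_single _ _ _ _ (List.nodup_finRange n) ⟨a, ha⟩ (List.mem_finRange _)
  · exact Equiv.swap_apply_right _ _
  · intro j _ hj
    have hja : j.val ≠ a := fun hh => hj (Fin.ext hh)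
    constructor <;>
    · apply Equiv.swap_apply_of_ne_of_ne <;>
      · intro hh
        have := congrArg Fin.val hh
        simp only at this
        omega

lemma pi0_symm_even {n : ℕ} (a : ℕ) (ha : a < n) (h1 : 2*a < 2*n) (h2 : 2*a+1 < 2*n) :
    (pi0 n).symm ⟨2*a, h1⟩ = ⟨2*a+1, h2⟩ := by
  rw [Equiv.symm_apply_eq]
  exact (pi0_apply_odd a ha h2 h1).symm

lemma pi0_symm_odd {n : ℕ} (a : ℕ) (ha : a < n) (h1 : 2*a+1 < 2*n) (h2 : 2*a < 2*n) :
    (pi0 n).symm ⟨2*a+1, h1⟩ = ⟨2*a, h2⟩ := by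
  rw [Equiv.symm_apply_eq]
  exact (pi0_apply_even a ha h2 h1).symm

lemma tau_apply_left {n : ℕ} (e : Fin n × Fin n) (t : Fin (2*n)) (h : t.val = 2*e.1.val+1) :
    (tau e t).val = 2 * e.2.val := by
  have ht : t = ⟨2*e.1.val+1, by have := e.1.isLt; omega⟩ := Fin.ext h
  rw [ht]
  unfold tau
  rw [Equiv.swap_apply_left]

lemma tau_apply_right {n : ℕ} (e : Fin n × Fin n) (t : Fin (2*n)) (h : t.val = 2*e.2.val) :
    (tau e t).val = 2 * e.1.val + 1 := by
  have ht : t = ⟨2*e.2.val, by have := e.2.isLt; omega⟩ := Fin.ext h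
  rw [ht]
  unfold tau
  rw [Equiv.swap_apply_right]

lemma tau_apply_other {n : ℕ} (e : Fin n × Fin n) (t : Fin (2*n))
    (h1 : t.val ≠ 2*e.1.val+1) (h2 : t.val ≠ 2*e.2.val) : tau e t = t := by
  unfold tau
  apply Equiv.swap_apply_of_ne_of_ne
  · intro hh; exact h1 (by rw [hh])
  · intro hh; exact h2 (by rw [hh])

lemma tau_sq {n : ℕ} (e : Fin n × Fin n) : tau e * tau e = 1 := by
  unfold tau; exact Equiv.swap_mul_self _ _

lemma rev_cancel {n : ℕ} : ∀ (m : List (Fin n × Fin n)),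
    (m.reverse.map tau).prod * (m.map tau).prod = 1 := by
  intro m
  induction m with
  | nil => rfl
  | cons e m ih =>
    simp only [List.reverse_cons, List.map_append, List.map_cons, List.map_nil,
      List.prod_append, List.prod_cons, List.prod_nil, mul_one]
    calc (m.reverse.map tau).prod * tau e * (tau e * (m.map tau).prod)
        = (m.reverse.map tau).prod * (tau e * tau e) * (m.map tau).prod := by group
      _ = 1 := by rw [tau_sq]; rw [mul_one]; exact ih

/-- The invariant for the main induction: state of the pair of tracked points. -/
def InvState {n : ℕ} (G : SimpleGraph (Fin n)) (x y : Fin n)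
    (r : List (Fin n × Fin n)) (Au Av : Fin (2 * n)) : Prop :=
  (∃ c d : Fin n, Av.val = 2 * c.val + 1 ∧ Au.val = 2 * d.val ∧ c ≤ x ∧ y ≤ d ∧
      ∀ g ∈ r, ¬(c ≤ g.1 ∧ g.2 ≤ d)) ∨
  (∃ a c d : Fin n, Au.val = 2 * a.val + 1 ∧ Av.val = 2 * c.val + 1 ∧ a < c ∧ c ≤ x ∧ y ≤ d ∧
      G.Adj a d ∧ ∀ g ∈ r, ¬(a ≤ g.1 ∧ g.2 ≤ d)) ∨
  (∃ cu cv d b : Fin n, Au.val = 2 * d.val ∧ Av.val = 2 * b.val ∧ cu ≤ cv ∧ cv ≤ x ∧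
      y ≤ d ∧ d < b ∧ G.Adj cv b ∧
      (∀ g ∈ r, ¬(cu ≤ g.1 ∧ g.2 ≤ d)) ∧ (∀ g ∈ r, ¬(cv ≤ g.1 ∧ g.2 ≤ b))) ∨
  (∃ a b dD cD : Fin n, Au.val = 2 * a.val + 1 ∧ Av.val = 2 * b.val ∧ a < x ∧ y < b ∧
      G.Adj a b ∧ (a, b) ∈ r ∧
      y ≤ dD ∧ dD < b ∧ G.Adj a dD ∧ (∀ g ∈ r, ¬(a ≤ g.1 ∧ g.2 ≤ dD)) ∧
      a < cD ∧ cD ≤ x ∧ G.Adj cD b ∧ (∀ g ∈ r, ¬(cD ≤ g.1 ∧ g.2 ≤ b)))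

set_option maxHeartbeats 4000000 in
/-- If `{x,y}` is a `⪯`-minimal edge of the terrain-like graph `G`, then `(2x, 2y-1)` is in
edge configuration in `Π(G)`. -/
theorem edgeConfig_of_min_edge {n : ℕ} (G : SimpleGraph (Fin n))
    (hG : TerrainLike G) (x y : Fin n) (hxy : x < y) (hadj : G.Adj x y)
    (hmin : ∀ u v : Fin n, u < v → G.Adj u v → PairLE (u, v) (x, y) → (u, v) = (x, y)) :
    ∀ l : List (Fin n × Fin n), ValidEdgeList G l →
      EdgeConfig (permOfList l) ⟨2 * x.val + 1, by have := x.isLt; omega⟩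
        ⟨2 * y.val, by have := y.isLt; omega⟩ := by
  intro l hl
  obtain ⟨hnd, hmemc, hpw⟩ := hl
  have hxyl : (x, y) ∈ l := (hmemc (x, y)).mpr ⟨hxy, hadj⟩
  obtain ⟨l₁, l₂, rfl⟩ := List.append_of_mem hxyl
  rw [List.nodup_append] at hnd
  obtain ⟨hndl₁, hndc, hdisj⟩ := hnd
  rw [List.pairwise_append] at hpw
  obtain ⟨hpw₁, hpwc, hcross⟩ := hpw
  rw [List.pairwise_cons] at hpwc
  obtain ⟨hxyl₂, hpwl₂⟩ := hpwc
  have hx2 : 2 * x.val + 1 < 2 * n := by have := x.isLt; omega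
  have hy2 : 2 * y.val < 2 * n := by have := y.isLt; omega
  have F1 : ∀ g ∈ l₁, g.1 < g.2 ∧ G.Adj g.1 g.2 :=
    fun g hg => (hmemc g).mp (List.mem_append_left _ hg)
  have F3 : ∀ g ∈ l₁, ¬(x ≤ g.1 ∧ g.2 ≤ y) := by
    intro g hg hh
    have hg2 := F1 g hg
    have heq := hmin g.1 g.2 hg2.1 hg2.2 ⟨hh.1, hh.2⟩
    have hgeq : g = (x, y) := by rw [← heq]
    rw [hgeq] at hg
    exact hdisj _ hg _ List.mem_cons_self rfl
  have F4 : ∀ a b : Fin n, a ≤ x → y ≤ b → a < b → G.Adj a b →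
      (a, b) = (x, y) ∨ (a, b) ∈ l₁ := by
    intro a b hax hyb hab hadj'
    have hme : (a, b) ∈ l₁ ++ (x, y) :: l₂ := (hmemc (a, b)).mpr ⟨hab, hadj'⟩
    rcases List.mem_append.mp hme with h | h
    · exact Or.inr h
    · rcases List.mem_cons.mp h with h | h
      · exact Or.inl h
      · exact absurd (⟨hax, hyb⟩ : PairLE (x, y) (a, b)) (hxyl₂ (a, b) h)
  have hL2 : ∀ g ∈ l₂, g.1 ≠ x ∧ g.2 ≠ y := by
    intro g hg
    have hgl : g ∈ l₁ ++ (x, y) :: l₂ :=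
      List.mem_append_right _ (List.mem_cons_of_mem _ hg)
    obtain ⟨hg12, hgAdj⟩ := (hmemc g).mp hgl
    have hgne : g ≠ (x, y) := by
      intro hh; rw [hh] at hg
      exact (List.nodup_cons.mp hndc).1 hg
    constructor
    · intro hh
      by_cases h2 : g.2 ≤ y
      · have heq := hmin g.1 g.2 hg12 hgAdj ⟨hh.ge, h2⟩
        exact hgne (by rw [← heq])
      · exact hxyl₂ g hg ⟨hh.le, le_of_lt (not_le.mp h2)⟩
    · intro hh
      by_cases h1 : x ≤ g.1
      · have heq := hmin g.1 g.2 hg12 hgAdj ⟨h1, hh.le⟩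
        exact hgne (by rw [← heq])
      · exact hxyl₂ g hg ⟨le_of_lt (not_le.mp h1), hh.ge⟩
  -- main induction
  have main : ∀ s : List (Fin n × Fin n), ∀ r, l₁ = r ++ s →
      InvState G x y r ((s.map tau).prod ⟨2 * y.val, hy2⟩)
        ((s.map tau).prod ⟨2 * x.val + 1, hx2⟩) := by
    intro s
    induction s with
    | nil =>
      intro r hr
      have hrl : r = l₁ := by simpa using hr.symm
      simp only [List.map_nil, List.prod_nil, Equiv.Perm.one_apply]
      left
      exact ⟨x, y, rfl, rfl, le_refl x, le_refl y,
        fun g hg hh => F3 g (hrl ▸ hg) hh⟩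
    | cons e s ih =>
      intro r hr
      have hr' : l₁ = (r ++ [e]) ++ s := by rw [hr]; simp
      have hprod : ∀ t : Fin (2*n), ((e :: s).map tau).prod t = tau e ((s.map tau).prod t) := by
        intro t; rw [List.map_cons, List.prod_cons, Equiv.Perm.mul_apply]
      rw [hprod, hprod]
      set Au := (s.map tau).prod ⟨2 * y.val, hy2⟩ with hAudef
      set Av := (s.map tau).prod ⟨2 * x.val + 1, hx2⟩ with hAvdef
      have IH := ih (r ++ [e]) hr'
      have heml₁ : e ∈ l₁ := by rw [hr]; exact List.mem_append_right _ (List.mem_cons_self)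
      obtain ⟨he12, heAdj⟩ := F1 e heml₁
      have hpw₁' := hpw₁
      rw [hr, List.pairwise_append] at hpw₁'
      obtain ⟨pwr, pwes, crossre⟩ := hpw₁'
      have hpre : ∀ g ∈ r, ¬(e.1 ≤ g.1 ∧ g.2 ≤ e.2) :=
        fun g hg => crossre g hg e (List.mem_cons_self)
      have hpes : ∀ g ∈ s, ¬(g.1 ≤ e.1 ∧ e.2 ≤ g.2) :=
        fun g hg => (List.pairwise_cons.mp pwes).1 g hg
      have he_mem_old : e ∈ r ++ [e] :=
        List.mem_append_right _ (List.mem_singleton_self e)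
      have hmemr : ∀ p q : Fin n, p < x → y ≤ q → p < q → G.Adj p q →
          p ≤ e.1 → e.2 ≤ q → e ≠ (p, q) → (p, q) ∈ r := by
        intro p q hpx hyq hpq hadj' hpe1 he2q hne
        rcases F4 p q hpx.le hyq hpq hadj' with h | h
        · exfalso
          exact (ne_of_lt hpx) (Prod.ext_iff.mp h).1
        · rw [hr] at h
          rcases List.mem_append.mp h with h | h
          · exact h
          · rcases List.mem_cons.mp h with h | h
            · exact absurd h.symm hne
            · exact absurd ⟨hpe1, he2q⟩ (hpes (p, q) h)
      rcases IH with ⟨c, d, hAv, hAu, hcx, hyd, CA⟩ |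
        ⟨a, c, d, hAu, hAv, hac, hcx, hyd, hAdjad, CB⟩ |
        ⟨cu, cv, d, b, hAu, hAv, hcucv, hcvx, hyd, hdb, hAdjcvb, CU, CV⟩ |
        ⟨a, b, dD, cD, hAu, hAv, hax, hyb, hAdjab, hpend, hydD, hdDb, hAdjadD, CdD,
          hacD, hcDx, hAdjcDb, CcD⟩
      · -- state A
        by_cases hc : e.1 = c
        · -- Av hit : A → C
          have hde2 : d < e.2 := not_le.mp (fun hh => CA e he_mem_old ⟨hc.ge, hh⟩)
          have hAv' : (tau e Av).val = 2 * e.2.val := tau_apply_left e Av (by rw [hAv, hc])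
          have hAu' : tau e Au = Au := by
            apply tau_apply_other
            · omega
            · intro hh
              exact (ne_of_gt hde2) (Fin.ext (by omega))
          right; right; left
          refine ⟨c, c, d, e.2, by rw [hAu']; exact hAu, hAv', le_refl c, hcx, hyd, hde2,
            ?_, fun g hg => CA g (List.mem_append_left _ hg), ?_⟩
          · rw [← hc]; exact heAdj
          · intro g hg hh
            exact hpre g hg ⟨by rw [hc]; exact hh.1, hh.2⟩
        · by_cases hd : e.2 = d
          · -- Au hit : A → B
            have he1c : e.1 < c := not_le.mp (fun hh => CA e he_mem_old ⟨hh, hd.le⟩)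
            have hAu' : (tau e Au).val = 2 * e.1.val + 1 := tau_apply_right e Au (by rw [hAu, hd])
            have hAv' : tau e Av = Av := by
              apply tau_apply_other
              · intro hh; exact hc (Fin.ext (by omega))
              · omega
            right; left
            refine ⟨e.1, c, d, hAu', by rw [hAv']; exact hAv, he1c, hcx, hyd, ?_, ?_⟩
            · rw [← hd]; exact heAdj
            · intro g hg hh
              exact hpre g hg ⟨hh.1, by rw [hd]; exact hh.2⟩
          · -- no hit
            have hAu' : tau e Au = Au := by
              apply tau_apply_other
              · omega
              · intro hh; exact hd (Fin.ext (by omega))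
            have hAv' : tau e Av = Av := by
              apply tau_apply_other
              · intro hh; exact hc (Fin.ext (by omega))
              · omega
            left
            exact ⟨c, d, by rw [hAv']; exact hAv, by rw [hAu']; exact hAu, hcx, hyd,
              fun g hg => CA g (List.mem_append_left _ hg)⟩
      · -- state B
        by_cases h1 : e.1 = a
        · -- Au hit : B → A
          have hde2 : d < e.2 := not_le.mp (fun hh => CB e he_mem_old ⟨h1.ge, hh⟩)
          have hAu' : (tau e Au).val = 2 * e.2.val := tau_apply_left e Au (by rw [hAu, h1])
          have hAv' : tau e Av = Av := by
            apply tau_apply_other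
            · intro hh
              have hv := congrArg Fin.val h1
              have hl := Fin.lt_def.mp hac
              omega
            · omega
          left
          refine ⟨c, e.2, by rw [hAv']; exact hAv, hAu', hcx, le_trans hyd hde2.le, ?_⟩
          intro g hg hh
          exact hpre g hg ⟨by rw [h1]; exact le_trans hac.le hh.1, hh.2⟩
        · by_cases h2 : e.1 = c
          · -- Av hit : B → D
            have hde2 : d < e.2 := not_le.mp (fun hh => CB e he_mem_old ⟨by rw [h2]; exact hac.le, hh⟩)
            have haxx : a < x := lt_of_lt_of_le hac hcx
            have hye2 : y < e.2 := lt_of_le_of_lt hyd hde2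
            have hcd : c < d := lt_of_le_of_lt hcx (lt_of_lt_of_le hxy hyd)
            have hAdjae2 : G.Adj a e.2 :=
              hG a c d e.2 hac hcd hde2 hAdjad (by rw [← h2]; exact heAdj)
            have hae2 : a < e.2 := lt_trans (lt_trans haxx hxy) hye2
            have hmem_ab : (a, e.2) ∈ r := by
              apply hmemr a e.2 haxx hye2.le hae2 hAdjae2 (by rw [h2]; exact hac.le) (le_refl _)
              intro hh
              exact h1 (Prod.ext_iff.mp hh).1
            have hAv' : (tau e Av).val = 2 * e.2.val := tau_apply_left e Av (by rw [hAv, h2])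
            have hAu' : tau e Au = Au := by
              apply tau_apply_other
              · intro hh
                have hv := congrArg Fin.val h2
                have hl := Fin.lt_def.mp hac
                omega
              · omega
            right; right; right
            refine ⟨a, e.2, d, c, by rw [hAu']; exact hAu, hAv', haxx, hye2, hAdjae2,
              hmem_ab, hyd, hde2, hAdjad,
              fun g hg => CB g (List.mem_append_left _ hg), hac, hcx,
              by rw [← h2]; exact heAdj, ?_⟩
            intro g hg hh
            exact hpre g hg ⟨by rw [h2]; exact hh.1, hh.2⟩
          · -- no hit
            have hAu' : tau e Au = Au := by
              apply tau_apply_other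
              · intro hh; exact h1 (Fin.ext (by omega))
              · omega
            have hAv' : tau e Av = Av := by
              apply tau_apply_other
              · intro hh; exact h2 (Fin.ext (by omega))
              · omega
            right; left
            exact ⟨a, c, d, by rw [hAu']; exact hAu, by rw [hAv']; exact hAv, hac, hcx, hyd,
              hAdjad, fun g hg => CB g (List.mem_append_left _ hg)⟩
      · -- state C
        by_cases h1 : e.2 = d
        · -- Au hit : C → D
          have he1cu : e.1 < cu := not_le.mp (fun hh => CU e he_mem_old ⟨hh, h1.le⟩)
          have he1cv : e.1 < cv := lt_of_lt_of_le he1cu hcucv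
          have he1x : e.1 < x := lt_of_lt_of_le he1cv hcvx
          have hyb : y < b := lt_of_le_of_lt hyd hdb
          have hcvd : cv < d := lt_of_le_of_lt hcvx (lt_of_lt_of_le hxy hyd)
          have hAdje1d : G.Adj e.1 d := by rw [← h1]; exact heAdj
          have hAdje1b : G.Adj e.1 b := hG e.1 cv d b he1cv hcvd hdb hAdje1d hAdjcvb
          have he1b : e.1 < b := lt_trans (lt_trans he1x hxy) hyb
          have hmem_ab : (e.1, b) ∈ r := by
            apply hmemr e.1 b he1x hyb.le he1b hAdje1b (le_refl _) (by rw [h1]; exact hdb.le)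
            intro hh
            have h2b : e.2 = b := (Prod.ext_iff.mp hh).2
            rw [h1] at h2b
            exact (ne_of_lt hdb) h2b
          have hAu' : (tau e Au).val = 2 * e.1.val + 1 := tau_apply_right e Au (by rw [hAu, h1])
          have hAv' : tau e Av = Av := by
            apply tau_apply_other
            · omega
            · intro hh
              have hv := congrArg Fin.val h1
              have hl := Fin.lt_def.mp hdb
              omega
          right; right; right
          refine ⟨e.1, b, d, cv, hAu', by rw [hAv']; exact hAv, he1x, hyb, hAdje1b, hmem_ab,
            hyd, hdb, hAdje1d, ?_, he1cv, hcvx, hAdjcvb,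
            fun g hg => CV g (List.mem_append_left _ hg)⟩
          intro g hg hh
          exact hpre g hg ⟨hh.1, by rw [h1]; exact hh.2⟩
        · by_cases h2 : e.2 = b
          · -- Av hit : C → A
            have he1cv : e.1 < cv := not_le.mp (fun hh => CV e he_mem_old ⟨hh, h2.le⟩)
            have hAv' : (tau e Av).val = 2 * e.1.val + 1 := tau_apply_right e Av (by rw [hAv, h2])
            have hAu' : tau e Au = Au := by
              apply tau_apply_other
              · omega
              · intro hh; exact h1 (Fin.ext (by omega))
            left
            refine ⟨e.1, d, hAv', by rw [hAu']; exact hAu,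
              le_trans he1cv.le hcvx, hyd, ?_⟩
            intro g hg hh
            exact hpre g hg ⟨hh.1, by rw [h2]; exact le_trans hh.2 hdb.le⟩
          · -- no hit
            have hAu' : tau e Au = Au := by
              apply tau_apply_other
              · omega
              · intro hh; exact h1 (Fin.ext (by omega))
            have hAv' : tau e Av = Av := by
              apply tau_apply_other
              · omega
              · intro hh; exact h2 (Fin.ext (by omega))
            right; right; left
            exact ⟨cu, cv, d, b, by rw [hAu']; exact hAu, by rw [hAv']; exact hAv, hcucv,
              hcvx, hyd, hdb, hAdjcvb, fun g hg => CU g (List.mem_append_left _ hg),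
              fun g hg => CV g (List.mem_append_left _ hg)⟩
      · -- state D
        by_cases h1 : e.1 = a
        · by_cases h2 : e.2 = b
          · -- e = (a,b) : D → A
            have hAu' : (tau e Au).val = 2 * e.2.val := tau_apply_left e Au (by rw [hAu, h1])
            have hAv' : (tau e Av).val = 2 * e.1.val + 1 := tau_apply_right e Av (by rw [hAv, h2])
            left
            refine ⟨e.1, e.2, hAv', hAu', by rw [h1]; exact hax.le, by rw [h2]; exact hyb.le, ?_⟩
            intro g hg hh
            exact hpre g hg hh
          · -- Au hit : D → C
            have hpr : (a, b) ∈ r := by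
              rcases List.mem_append.mp hpend with h | h
              · exact h
              · exfalso
                rw [List.mem_singleton] at h
                exact h2 ((Prod.ext_iff.mp h.symm).2)
            have he2b : e.2 < b :=
              not_le.mp (fun hh => hpre (a, b) hpr ⟨h1.le, hh⟩)
            have hdDe2 : dD < e.2 := not_le.mp (fun hh => CdD e he_mem_old ⟨h1.ge, hh⟩)
            have hAu' : (tau e Au).val = 2 * e.2.val := tau_apply_left e Au (by rw [hAu, h1])
            have hAv' : tau e Av = Av := by
              apply tau_apply_other
              · omega
              · intro hh; exact h2 (Fin.ext (by omega))
            right; right; left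
            refine ⟨a, cD, e.2, b, hAu', by rw [hAv']; exact hAv, hacD.le, hcDx,
              le_trans hydD hdDe2.le, he2b, hAdjcDb, ?_,
              fun g hg => CcD g (List.mem_append_left _ hg)⟩
            intro g hg hh
            exact hpre g hg ⟨by rw [h1]; exact hh.1, hh.2⟩
        · by_cases h2 : e.2 = b
          · -- Av hit : D → B
            have hpr : (a, b) ∈ r := by
              rcases List.mem_append.mp hpend with h | h
              · exact h
              · exfalso
                rw [List.mem_singleton] at h
                exact h1 ((Prod.ext_iff.mp h.symm).1)
            have hae1 : a < e.1 :=
              not_le.mp (fun hh => hpre (a, b) hpr ⟨hh, h2.ge⟩)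
            have he1cD : e.1 < cD := not_le.mp (fun hh => CcD e he_mem_old ⟨hh, h2.le⟩)
            have hAv' : (tau e Av).val = 2 * e.1.val + 1 := tau_apply_right e Av (by rw [hAv, h2])
            have hAu' : tau e Au = Au := by
              apply tau_apply_other
              · intro hh; exact h1 (Fin.ext (by omega))
              · omega
            right; left
            exact ⟨a, e.1, dD, by rw [hAu']; exact hAu, hAv', hae1,
              le_trans he1cD.le hcDx, hydD, hAdjadD,
              fun g hg => CdD g (List.mem_append_left _ hg)⟩
          · -- no hit
            have hpr : (a, b) ∈ r := by
              rcases List.mem_append.mp hpend with h | h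
              · exact h
              · exfalso
                rw [List.mem_singleton] at h
                exact h1 ((Prod.ext_iff.mp h.symm).1)
            have hAu' : tau e Au = Au := by
              apply tau_apply_other
              · intro hh; exact h1 (Fin.ext (by omega))
              · omega
            have hAv' : tau e Av = Av := by
              apply tau_apply_other
              · omega
              · intro hh; exact h2 (Fin.ext (by omega))
            right; right; right
            exact ⟨a, b, dD, cD, by rw [hAu']; exact hAu, by rw [hAv']; exact hAv, hax, hyb,
              hAdjab, hpr, hydD, hdDb, hAdjadD,
              fun g hg => CdD g (List.mem_append_left _ hg), hacD, hcDx, hAdjcDb,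
              fun g hg => CcD g (List.mem_append_left _ hg)⟩
  -- end of main induction
  have hinv := main l₁ [] (by simp)
  -- evaluation of the full permutation
  have hPsymm : ∀ t : Fin (2*n), (permOfList (l₁ ++ (x, y) :: l₂)).symm t
      = (pi0 n).symm (((l₁ ++ (x, y) :: l₂).map tau).prod t) := by
    intro t
    rw [Equiv.symm_apply_eq]
    unfold permOfList
    rw [Equiv.Perm.mul_apply, Equiv.apply_symm_apply, ← Equiv.Perm.mul_apply, rev_cancel,
      Equiv.Perm.one_apply]
  have hfix2 : ∀ t : Fin (2*n), (t.val = 2*x.val+1 ∨ t.val = 2*y.val) →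
      (l₂.map tau).prod t = t := by
    intro t ht
    apply prod_fix
    intro σ hσ
    obtain ⟨g, hg, rfl⟩ := List.mem_map.mp hσ
    obtain ⟨hg1, hg2⟩ := hL2 g hg
    apply tau_apply_other
    · rcases ht with ht | ht
      · intro hh; exact hg1 (Fin.ext (by omega))
      · omega
    · rcases ht with ht | ht
      · omega
      · intro hh; exact hg2 (Fin.ext (by omega))
  have hvi : ((l₁ ++ (x, y) :: l₂).map tau).prod ⟨2*x.val+1, hx2⟩
      = (l₁.map tau).prod ⟨2*y.val, hy2⟩ := by
    rw [List.map_append, List.prod_append, Equiv.Perm.mul_apply, List.map_cons, List.prod_cons,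
      Equiv.Perm.mul_apply, hfix2 _ (Or.inl rfl)]
    congr 1
    exact Fin.ext (tau_apply_left (x, y) _ rfl)
  have hvj : ((l₁ ++ (x, y) :: l₂).map tau).prod ⟨2*y.val, hy2⟩
      = (l₁.map tau).prod ⟨2*x.val+1, hx2⟩ := by
    rw [List.map_append, List.prod_append, Equiv.Perm.mul_apply, List.map_cons, List.prod_cons,
      Equiv.Perm.mul_apply, hfix2 _ (Or.inr rfl)]
    congr 1
    exact Fin.ext (tau_apply_right (x, y) _ rfl)
  have hxv := Fin.lt_def.mp hxy
  show ((permOfList (l₁ ++ (x, y) :: l₂)).symm ⟨2*x.val+1, hx2⟩).val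
      < ((permOfList (l₁ ++ (x, y) :: l₂)).symm ⟨2*y.val, hy2⟩).val ↔
      ((permOfList (l₁ ++ (x, y) :: l₂)).symm ⟨2*x.val+1, hx2⟩).val % 2
      = ((permOfList (l₁ ++ (x, y) :: l₂)).symm ⟨2*y.val, hy2⟩).val % 2
  rw [hPsymm, hPsymm, hvi, hvj]
  rcases hinv with ⟨c, d, hAv, hAu, hcx, hyd, _⟩ |
    ⟨a, c, d, hAu, hAv, hac, hcx, hyd, _, _⟩ |
    ⟨cu, cv, d, b, hAu, hAv, _, _, _, hdb, _, _, _⟩ |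
    ⟨a, b, dD, cD, _, _, _, _, _, hpend, _⟩
  · -- final state A : u = 2d+1, v = 2c, c < d: not in order, different parity
    have hcv := Fin.le_def.mp hcx
    have hdv := Fin.le_def.mp hyd
    have hU : ((pi0 n).symm ((List.map tau l₁).prod ⟨2*y.val, hy2⟩)).val = 2*d.val+1 := by
      have hAuF : (List.map tau l₁).prod ⟨2*y.val, hy2⟩
          = ⟨2*d.val, by have := d.isLt; omega⟩ := Fin.ext hAu
      rw [hAuF]
      exact congrArg Fin.val (pi0_symm_even (n := n) d.val d.isLt
        (by have := d.isLt; omega) (by have := d.isLt; omega))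
    have hV : ((pi0 n).symm ((List.map tau l₁).prod ⟨2*x.val+1, hx2⟩)).val = 2*c.val := by
      have hAvF : (List.map tau l₁).prod ⟨2*x.val+1, hx2⟩
          = ⟨2*c.val+1, by have := c.isLt; omega⟩ := Fin.ext hAv
      rw [hAvF]
      exact congrArg Fin.val (pi0_symm_odd (n := n) c.val c.isLt
        (by have := c.isLt; omega) (by have := c.isLt; omega))
    rw [hU, hV]
    exact iff_of_false (by omega) (by omega)
  · -- final state B : u = 2a, v = 2c, a < c: in order, same parity
    have hacv := Fin.lt_def.mp hac
    have hU : ((pi0 n).symm ((List.map tau l₁).prod ⟨2*y.val, hy2⟩)).val = 2*a.val := by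
      have hAuF : (List.map tau l₁).prod ⟨2*y.val, hy2⟩
          = ⟨2*a.val+1, by have := a.isLt; omega⟩ := Fin.ext hAu
      rw [hAuF]
      exact congrArg Fin.val (pi0_symm_odd (n := n) a.val a.isLt
        (by have := a.isLt; omega) (by have := a.isLt; omega))
    have hV : ((pi0 n).symm ((List.map tau l₁).prod ⟨2*x.val+1, hx2⟩)).val = 2*c.val := by
      have hAvF : (List.map tau l₁).prod ⟨2*x.val+1, hx2⟩
          = ⟨2*c.val+1, by have := c.isLt; omega⟩ := Fin.ext hAv
      rw [hAvF]
      exact congrArg Fin.val (pi0_symm_odd (n := n) c.val c.isLt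
        (by have := c.isLt; omega) (by have := c.isLt; omega))
    rw [hU, hV]
    exact iff_of_true (by omega) (by omega)
  · -- final state C : u = 2d+1, v = 2b+1, d < b: in order, same parity
    have hdbv := Fin.lt_def.mp hdb
    have hU : ((pi0 n).symm ((List.map tau l₁).prod ⟨2*y.val, hy2⟩)).val = 2*d.val+1 := by
      have hAuF : (List.map tau l₁).prod ⟨2*y.val, hy2⟩
          = ⟨2*d.val, by have := d.isLt; omega⟩ := Fin.ext hAu
      rw [hAuF]
      exact congrArg Fin.val (pi0_symm_even (n := n) d.val d.isLt
        (by have := d.isLt; omega) (by have := d.isLt; omega))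
    have hV : ((pi0 n).symm ((List.map tau l₁).prod ⟨2*x.val+1, hx2⟩)).val = 2*b.val+1 := by
      have hAvF : (List.map tau l₁).prod ⟨2*x.val+1, hx2⟩
          = ⟨2*b.val, by have := b.isLt; omega⟩ := Fin.ext hAv
      rw [hAvF]
      exact congrArg Fin.val (pi0_symm_even (n := n) b.val b.isLt
        (by have := b.isLt; omega) (by have := b.isLt; omega))
    rw [hU, hV]
    exact iff_of_true (by omega) (by omega)
  · -- final state D is impossible: pending edge in empty list
    exact absurd hpend List.not_mem_nil
end
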